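/- Under the assumption that e^{-2r(1−ρ)t}(1+|X_t|²) is a supermartingale for some ρ ∈ (0,1), the operator Λ maps the weighted space A_d into itself: if f ∈ A_d then Λf is continuous, nonnegative, and satisfies |(Λf)(x)| ≤ (p‖ψ‖ + (1−p)‖f‖)(1+|x|²)^{1/2} for all x. -/

import Mathlib

set_option maxHeartbeats 1000000


open MeasureTheory Set

/-- Under the moment bound `E[e^{-2rt}(1+‖X^x_t‖²)] ≤ 1+‖x‖²` and continuity of the
stochastic flow `x ↦ X^x_t`, the operator
`(Λ f)(x) = ∫₀^∞ e^{-rt} E[p ψ(X^x_t) + (1-p) f(X^x_t)] F(dt)` maps the weighted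
space `A_d` into itself: `Λ f` is continuous, nonnegative, and satisfies
`|(Λf)(x)| ≤ (p‖ψ‖ + (1-p)‖f‖)(1+‖x‖²)^{1/2}`. -/
theorem stmt4 {d : ℕ} {Ω : Type*} [MeasurableSpace Ω]
    (P : Measure Ω) [IsProbabilityMeasure P]
    (r p : ℝ) (hr : 0 < r) (hp : p ∈ Set.Ioo (0 : ℝ) 1)
    (X : ℝ → EuclideanSpace ℝ (Fin d) → Ω → EuclideanSpace ℝ (Fin d))
    (hflow : ∀ t ω, Continuous fun x => X t x ω)
    (hmeas : ∀ t x, Measurable fun ω => X t x ω)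
    (hmom : ∀ t ≥ (0 : ℝ), ∀ x,
      ∫ ω, Real.exp (-2 * r * t) * (1 + ‖X t x ω‖ ^ 2) ∂P ≤ 1 + ‖x‖ ^ 2)
    (hmomInt : ∀ t x, Integrable (fun ω => 1 + ‖X t x ω‖ ^ 2) P)
    (F : Measure ℝ) [IsProbabilityMeasure F] (hF : F (Set.Iio 0) = 0)
    (ψ f : EuclideanSpace ℝ (Fin d) → ℝ)
    (hψc : Continuous ψ) (hψ0 : ∀ x, 0 ≤ ψ x)
    (hfc : Continuous f) (hf0 : ∀ x, 0 ≤ f x)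
    (Cψ Cf : ℝ)
    (hCψ : ∀ x, |ψ x| ≤ Cψ * Real.sqrt (1 + ‖x‖ ^ 2))
    (hCf : ∀ x, |f x| ≤ Cf * Real.sqrt (1 + ‖x‖ ^ 2))
    (hmeasT : ∀ x, AEStronglyMeasurable
      (fun t => ∫ ω, (p * ψ (X t x ω) + (1 - p) * f (X t x ω)) ∂P) F) :
    Continuous (fun x =>
        ∫ t, Real.exp (-r * t) * ∫ ω, (p * ψ (X t x ω) + (1 - p) * f (X t x ω)) ∂P ∂F)
    ∧ (∀ x, 0 ≤
        ∫ t, Real.exp (-r * t) * ∫ ω, (p * ψ (X t x ω) + (1 - p) * f (X t x ω)) ∂P ∂F)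
    ∧ (∀ x, |∫ t, Real.exp (-r * t) *
          ∫ ω, (p * ψ (X t x ω) + (1 - p) * f (X t x ω)) ∂P ∂F|
        ≤ (p * Cψ + (1 - p) * Cf) * Real.sqrt (1 + ‖x‖ ^ 2)) := by
  obtain ⟨hp0, hp1⟩ := hp
  set h : EuclideanSpace ℝ (Fin d) → ℝ := fun y => p * ψ y + (1 - p) * f y with hhdef
  set C : ℝ := p * Cψ + (1 - p) * Cf with hCdef
  -- basic facts about the constants
  have hCψ0 : 0 ≤ Cψ := by
    have h0 := (abs_nonneg (ψ 0)).trans (hCψ 0)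
    have hs : 0 < Real.sqrt (1 + ‖(0:EuclideanSpace ℝ (Fin d))‖ ^ 2) := Real.sqrt_pos.mpr (by positivity)
    nlinarith
  have hCf0 : 0 ≤ Cf := by
    have h0 := (abs_nonneg (f 0)).trans (hCf 0)
    have hs : 0 < Real.sqrt (1 + ‖(0:EuclideanSpace ℝ (Fin d))‖ ^ 2) := Real.sqrt_pos.mpr (by positivity)
    nlinarith
  have hC0 : 0 ≤ C := by
    rw [hCdef]; nlinarith
  -- facts about h
  have hh0 : ∀ y, 0 ≤ h y := fun y =>
    add_nonneg (mul_nonneg hp0.le (hψ0 y)) (mul_nonneg (by linarith) (hf0 y))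
  have hhb : ∀ y : EuclideanSpace ℝ (Fin d), h y ≤ C * Real.sqrt (1 + ‖y‖ ^ 2) := by
    intro y
    have h1 := (le_abs_self (ψ y)).trans (hCψ y)
    have h2 := (le_abs_self (f y)).trans (hCf y)
    show p * ψ y + (1 - p) * f y ≤ (p * Cψ + (1 - p) * Cf) * Real.sqrt (1 + ‖y‖ ^ 2)
    nlinarith [Real.sqrt_nonneg (1 + ‖y‖ ^ 2)]
  have hhc : Continuous h := (continuous_const.mul hψc).add (continuous_const.mul hfc)
  have hsqle : ∀ y : EuclideanSpace ℝ (Fin d), Real.sqrt (1 + ‖y‖ ^ 2) ≤ 1 + ‖y‖ ^ 2 := by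
    intro y
    have hy : (0:ℝ) ≤ 1 + ‖y‖ ^ 2 := by positivity
    nlinarith [Real.sq_sqrt hy, Real.sqrt_nonneg (1 + ‖y‖ ^ 2),
      sq_nonneg (Real.sqrt (1 + ‖y‖ ^ 2) - 1)]
  -- measurability and integrability of h ∘ X
  have hXsm : ∀ t x, AEStronglyMeasurable (fun ω => h (X t x ω)) P := fun t x =>
    (hhc.measurable.comp (hmeas t x)).aestronglyMeasurable
  have hInth : ∀ t x, Integrable (fun ω => h (X t x ω)) P := by
    intro t x
    refine ((hmomInt t x).const_mul C).mono' (hXsm t x) (ae_of_all _ fun ω => ?_)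
    rw [Real.norm_eq_abs, abs_of_nonneg (hh0 _)]
    calc h (X t x ω) ≤ C * Real.sqrt (1 + ‖X t x ω‖ ^ 2) := hhb _
      _ ≤ C * (1 + ‖X t x ω‖ ^ 2) := by
          exact mul_le_mul_of_nonneg_left (hsqle _) hC0
  -- integrated moment bound
  have hmom2 : ∀ t, 0 ≤ t → ∀ x : EuclideanSpace ℝ (Fin d),
      ∫ ω, (1 + ‖X t x ω‖ ^ 2) ∂P ≤ Real.exp (2 * r * t) * (1 + ‖x‖ ^ 2) := by
    intro t ht x
    have h1 := hmom t ht x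
    rw [integral_const_mul] at h1
    have hee : Real.exp (-2 * r * t) * Real.exp (2 * r * t) = 1 := by
      rw [← Real.exp_add, show (-2) * r * t + 2 * r * t = 0 by ring, Real.exp_zero]
    nlinarith [Real.exp_pos (2 * r * t), Real.exp_pos (-2 * r * t)]
  -- the key integral bound
  have hIb : ∀ t, 0 ≤ t → ∀ x : EuclideanSpace ℝ (Fin d),
      ∫ ω, h (X t x ω) ∂P ≤ C * Real.exp (r * t) * Real.sqrt (1 + ‖x‖ ^ 2) := by
    intro t ht x
    set b : ℝ := Real.exp (2 * r * t) * (1 + ‖x‖ ^ 2) with hbdef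
    have hb : 0 < b := by positivity
    have hsb : Real.sqrt b = Real.exp (r * t) * Real.sqrt (1 + ‖x‖ ^ 2) := by
      rw [hbdef, Real.sqrt_mul (Real.exp_nonneg _),
        show (2:ℝ) * r * t = r * t + r * t by ring, Real.exp_add,
        Real.sqrt_mul_self (Real.exp_nonneg _)]
    have hsbpos : 0 < Real.sqrt b := Real.sqrt_pos.mpr hb
    have key : ∀ a : ℝ, 0 ≤ a → Real.sqrt a ≤ (a + b) / (2 * Real.sqrt b) := by
      intro a ha
      rw [le_div_iff₀ (by positivity)]
      nlinarith [Real.sq_sqrt ha, Real.sq_sqrt hb.le, Real.sqrt_nonneg a,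
        sq_nonneg (Real.sqrt a - Real.sqrt b)]
    have hIntR : Integrable (fun ω => (C / (2 * Real.sqrt b)) * ((1 + ‖X t x ω‖ ^ 2) + b)) P :=
      ((hmomInt t x).add (integrable_const b)).const_mul _
    calc ∫ ω, h (X t x ω) ∂P
        ≤ ∫ ω, (C / (2 * Real.sqrt b)) * ((1 + ‖X t x ω‖ ^ 2) + b) ∂P := by
          refine integral_mono (hInth t x) hIntR fun ω => ?_
          calc h (X t x ω) ≤ C * Real.sqrt (1 + ‖X t x ω‖ ^ 2) := hhb _
            _ ≤ C * (((1 + ‖X t x ω‖ ^ 2) + b) / (2 * Real.sqrt b)) :=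
                mul_le_mul_of_nonneg_left (key _ (by positivity)) hC0
            _ = (C / (2 * Real.sqrt b)) * ((1 + ‖X t x ω‖ ^ 2) + b) := by ring
      _ = (C / (2 * Real.sqrt b)) * ((∫ ω, (1 + ‖X t x ω‖ ^ 2) ∂P) + b) := by
          rw [integral_const_mul, integral_add (hmomInt t x) (integrable_const b),
            integral_const]
          simp [measure_univ]
      _ ≤ (C / (2 * Real.sqrt b)) * (b + b) := by
          refine mul_le_mul_of_nonneg_left ?_ (by positivity)
          have := hmom2 t ht x
          linarith
      _ = C * (b / Real.sqrt b) := by ring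
      _ = C * Real.sqrt b := by rw [Real.div_sqrt]
      _ = C * Real.exp (r * t) * Real.sqrt (1 + ‖x‖ ^ 2) := by rw [hsb]; ring
  -- nonnegativity of the inner integral
  have hInn : ∀ t (x : EuclideanSpace ℝ (Fin d)), 0 ≤ ∫ ω, h (X t x ω) ∂P := fun t x =>
    integral_nonneg fun ω => hh0 _
  -- a.e. nonnegativity of t under F
  have haeF : ∀ᵐ t ∂F, 0 ≤ t := by
    rw [ae_iff]
    convert hF using 2
    ext t; simp [not_le]
  -- continuity of the inner integral in x
  have hIcont : ∀ t, 0 ≤ t → ∀ x₀ : EuclideanSpace ℝ (Fin d),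
      ContinuousAt (fun x => ∫ ω, h (X t x ω) ∂P) x₀ := by
    intro t ht x₀
    set K : ℝ := 1 + (‖x₀‖ + 1) ^ 2 with hKdef
    -- integrability of the truncations
    have hIntmin : ∀ (n : ℕ) (x : EuclideanSpace ℝ (Fin d)), Integrable (fun ω => min (h (X t x ω)) (n:ℝ)) P := by
      intro n x
      refine (hInth t x).mono' ((hhc.measurable.comp (hmeas t x)).min
        measurable_const).aestronglyMeasurable (ae_of_all _ fun ω => ?_)
      rw [Real.norm_eq_abs, abs_of_nonneg (le_min (hh0 _) n.cast_nonneg)]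
      exact min_le_left _ _
    -- each truncation is continuous in x
    have hn_cont : ∀ n : ℕ, Continuous (fun x : EuclideanSpace ℝ (Fin d) => ∫ ω, min (h (X t x ω)) (n:ℝ) ∂P) := by
      intro n
      refine continuous_of_dominated (bound := fun _ => (n:ℝ))
        (fun x => ((hhc.measurable.comp (hmeas t x)).min
          measurable_const).aestronglyMeasurable)
        (fun x => ae_of_all _ fun ω => ?_) (integrable_const _)
        (ae_of_all _ fun ω => ((hhc.comp (hflow t ω)).min continuous_const))
      rw [Real.norm_eq_abs, abs_of_nonneg (le_min (hh0 _) n.cast_nonneg)]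
      exact min_le_right _ _
    -- tail estimate
    have htail : ∀ n : ℕ, 1 ≤ n → ∀ x : EuclideanSpace ℝ (Fin d),
        (∫ ω, h (X t x ω) ∂P) - (∫ ω, min (h (X t x ω)) (n:ℝ) ∂P)
          ≤ C ^ 2 * (Real.exp (2 * r * t) * (1 + ‖x‖ ^ 2)) / n := by
      intro n hn x
      have hnpos : (0:ℝ) < n := by exact_mod_cast hn
      have hpt : ∀ ω, h (X t x ω) - min (h (X t x ω)) (n:ℝ)
          ≤ (C ^ 2 / n) * (1 + ‖X t x ω‖ ^ 2) := by
        intro ω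
        set y := X t x ω
        rcases le_total (h y) (n:ℝ) with hc | hc
        · rw [min_eq_left hc, sub_self]
          positivity
        · rw [min_eq_right hc]
          have hq : Real.sqrt (1 + ‖y‖ ^ 2) ^ 2 = 1 + ‖y‖ ^ 2 :=
            Real.sq_sqrt (by positivity)
          have hub := hhb y
          rw [div_mul_eq_mul_div, le_div_iff₀ hnpos]
          have h2 : h y * h y ≤ (C * Real.sqrt (1 + ‖y‖ ^ 2)) * (C * Real.sqrt (1 + ‖y‖ ^ 2)) :=
            mul_self_le_mul_self (hh0 y) hub
          nlinarith
      calc (∫ ω, h (X t x ω) ∂P) - (∫ ω, min (h (X t x ω)) (n:ℝ) ∂P)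
          = ∫ ω, (h (X t x ω) - min (h (X t x ω)) (n:ℝ)) ∂P :=
            (integral_sub (hInth t x) (hIntmin n x)).symm
        _ ≤ ∫ ω, (C ^ 2 / n) * (1 + ‖X t x ω‖ ^ 2) ∂P :=
            integral_mono ((hInth t x).sub (hIntmin n x))
              ((hmomInt t x).const_mul _) hpt
        _ = (C ^ 2 / n) * ∫ ω, (1 + ‖X t x ω‖ ^ 2) ∂P := integral_const_mul _ _
        _ ≤ (C ^ 2 / n) * (Real.exp (2 * r * t) * (1 + ‖x‖ ^ 2)) := by
            exact mul_le_mul_of_nonneg_left (hmom2 t ht x) (by positivity)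
        _ = C ^ 2 * (Real.exp (2 * r * t) * (1 + ‖x‖ ^ 2)) / n := by ring
    -- uniform convergence on the ball
    have hUnif : TendstoUniformlyOn (fun (n:ℕ) (x : EuclideanSpace ℝ (Fin d)) => ∫ ω, min (h (X t x ω)) (n:ℝ) ∂P)
        (fun x => ∫ ω, h (X t x ω) ∂P) Filter.atTop (Metric.ball x₀ 1) := by
      rw [Metric.tendstoUniformlyOn_iff]
      intro ε hε
      have hD : Filter.Tendsto
          (fun n : ℕ => (C ^ 2 * (Real.exp (2 * r * t) * K)) / n) Filter.atTop (nhds 0) :=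
        tendsto_const_div_atTop_nhds_zero_nat _
      filter_upwards [hD.eventually_lt_const hε, Filter.eventually_ge_atTop 1] with n hn hn1
      intro x hx
      have hxb : ‖x‖ ≤ ‖x₀‖ + 1 := by
        have h1 : ‖x - x₀‖ < 1 := by rwa [Metric.mem_ball, dist_eq_norm] at hx
        have h2 := norm_sub_norm_le x x₀
        linarith
      have hxK : 1 + ‖x‖ ^ 2 ≤ K := by
        rw [hKdef]
        nlinarith [norm_nonneg x, norm_nonneg x₀]
      have hle : (∫ ω, min (h (X t x ω)) (n:ℝ) ∂P) ≤ ∫ ω, h (X t x ω) ∂P :=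
        integral_mono (hIntmin n x) (hInth t x) fun ω => min_le_left _ _
      rw [Real.dist_eq, abs_of_nonneg (sub_nonneg.mpr hle)]
      have hnpos : (0:ℝ) < n := by exact_mod_cast hn1
      calc (∫ ω, h (X t x ω) ∂P) - (∫ ω, min (h (X t x ω)) (n:ℝ) ∂P)
          ≤ C ^ 2 * (Real.exp (2 * r * t) * (1 + ‖x‖ ^ 2)) / n := htail n hn1 x
        _ ≤ C ^ 2 * (Real.exp (2 * r * t) * K) / n := by
            gcongr
        _ < ε := hn
    exact (hUnif.continuousOn
      (Filter.Frequently.of_forall fun n => (hn_cont n).continuousOn)).continuousAt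
      (Metric.ball_mem_nhds x₀ one_pos)
  -- Now the three claims
  refine ⟨?_, ?_, ?_⟩
  · -- continuity
    rw [continuous_iff_continuousAt]
    intro x₀
    set K : ℝ := 1 + (‖x₀‖ + 1) ^ 2 with hKdef
    refine continuousAt_of_dominated (bound := fun _ => C * Real.sqrt K)
      (Filter.Eventually.of_forall fun x =>
        ((Real.continuous_exp.comp (continuous_const.mul continuous_id)).aestronglyMeasurable).mul
          (hmeasT x)) ?_ (integrable_const _) ?_
    · -- bound on a neighborhood
      filter_upwards [Metric.ball_mem_nhds x₀ one_pos] with x hx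
      filter_upwards [haeF] with t ht
      have hxb : ‖x‖ ≤ ‖x₀‖ + 1 := by
        have h1 : ‖x - x₀‖ < 1 := by rwa [Metric.mem_ball, dist_eq_norm] at hx
        have h2 := norm_sub_norm_le x x₀
        linarith
      have hxK : 1 + ‖x‖ ^ 2 ≤ K := by
        rw [hKdef]; nlinarith [norm_nonneg x, norm_nonneg x₀]
      have hee : Real.exp (-r * t) * Real.exp (r * t) = 1 := by
        rw [← Real.exp_add, show -r * t + r * t = 0 by ring, Real.exp_zero]
      rw [Real.norm_eq_abs, abs_of_nonneg (mul_nonneg (Real.exp_nonneg _) (hInn t x))]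
      calc Real.exp (-r * t) * ∫ ω, h (X t x ω) ∂P
          ≤ Real.exp (-r * t) * (C * Real.exp (r * t) * Real.sqrt (1 + ‖x‖ ^ 2)) :=
            mul_le_mul_of_nonneg_left (hIb t ht x) (Real.exp_nonneg _)
        _ = C * Real.sqrt (1 + ‖x‖ ^ 2) := by
            rw [show Real.exp (-r * t) * (C * Real.exp (r * t) * Real.sqrt (1 + ‖x‖ ^ 2))
              = (Real.exp (-r * t) * Real.exp (r * t)) * (C * Real.sqrt (1 + ‖x‖ ^ 2)) by ring,
              hee, one_mul]
        _ ≤ C * Real.sqrt K := by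
            exact mul_le_mul_of_nonneg_left (Real.sqrt_le_sqrt hxK) hC0
    · -- a.e. continuity in x
      filter_upwards [haeF] with t ht
      exact (continuousAt_const.mul (hIcont t ht x₀))
  · -- nonnegativity
    intro x
    refine integral_nonneg fun t => ?_
    exact mul_nonneg (Real.exp_nonneg _) (hInn t x)
  · -- the bound
    intro x
    rw [← Real.norm_eq_abs]
    have hb : ∀ᵐ t ∂F, ‖Real.exp (-r * t) * ∫ ω, h (X t x ω) ∂P‖
        ≤ C * Real.sqrt (1 + ‖x‖ ^ 2) := by
      filter_upwards [haeF] with t ht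
      have hee : Real.exp (-r * t) * Real.exp (r * t) = 1 := by
        rw [← Real.exp_add, show -r * t + r * t = 0 by ring, Real.exp_zero]
      rw [Real.norm_eq_abs, abs_of_nonneg (mul_nonneg (Real.exp_nonneg _) (hInn t x))]
      calc Real.exp (-r * t) * ∫ ω, h (X t x ω) ∂P
          ≤ Real.exp (-r * t) * (C * Real.exp (r * t) * Real.sqrt (1 + ‖x‖ ^ 2)) :=
            mul_le_mul_of_nonneg_left (hIb t ht x) (Real.exp_nonneg _)
        _ = C * Real.sqrt (1 + ‖x‖ ^ 2) := by
            rw [show Real.exp (-r * t) * (C * Real.exp (r * t) * Real.sqrt (1 + ‖x‖ ^ 2))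
              = (Real.exp (-r * t) * Real.exp (r * t)) * (C * Real.sqrt (1 + ‖x‖ ^ 2)) by ring,
              hee, one_mul]
    calc ‖∫ t, Real.exp (-r * t) * ∫ ω, h (X t x ω) ∂P ∂F‖
        ≤ (C * Real.sqrt (1 + ‖x‖ ^ 2)) * (F Set.univ).toReal :=
          norm_integral_le_of_norm_le_const hb
      _ = C * Real.sqrt (1 + ‖x‖ ^ 2) := by simp [measure_univ]
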